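/- Let B be a nonnegative random variable with c.d.f. F, F(0) = 0, finite mean E[B] > 0, and unbounded support (x_R = ∞). Define G(x) = (1/E[B])∫₀ˣ (1-F(t)) dt. If the tail 1-F has finite lower Matuszewska index β(1-F) > -∞, then the upper Matuszewska index of 1-G satisfies α(1-G) ≤ α(1-F) + 1 and the lower index satisfies β(1-G) ≥ β(1-F) + 1. -/

import Mathlib

open Filter Set

/-- The set of admissible upper exponents in the definition of the upper Matuszewska index:
`a` belongs to the set if there is `C > 0` such that for each `μ* > 1`,
`f (μ x) ≤ C μ^a f x` for all `μ ∈ [1, μ*]` and all sufficiently large `x`. -/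
def upperMatSet (f : ℝ → ℝ) : Set ℝ :=
  {a | ∃ C > (0 : ℝ), ∀ μs > (1 : ℝ), ∃ X : ℝ, ∀ x ≥ X, ∀ μ ∈ Set.Icc (1 : ℝ) μs,
    f (μ * x) ≤ C * μ ^ a * f x}

/-- The upper Matuszewska index `α(f)` as an extended real number. -/
noncomputable def upperMat (f : ℝ → ℝ) : EReal :=
  sInf ((fun a : ℝ => (a : EReal)) '' upperMatSet f)

/-- The set of admissible lower exponents in the definition of the lower Matuszewska index. -/
def lowerMatSet (f : ℝ → ℝ) : Set ℝ :=
  {b | ∃ D > (0 : ℝ), ∀ μs > (1 : ℝ), ∃ X : ℝ, ∀ x ≥ X, ∀ μ ∈ Set.Icc (1 : ℝ) μs,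
    D * μ ^ b * f x ≤ f (μ * x)}

/-- The lower Matuszewska index `β(f)` as an extended real number. -/
noncomputable def lowerMat (f : ℝ → ℝ) : EReal :=
  sSup ((fun b : ℝ => (b : EReal)) '' lowerMatSet f)

open MeasureTheory

/-- Adding the real constant `1` is an order isomorphism of `EReal`. -/
noncomputable def erealAddOne : EReal ≃o EReal where
  toFun x := x + (1 : ℝ)
  invFun x := x - (1 : ℝ)
  left_inv _ := EReal.add_sub_cancel_right
  right_inv _ := EReal.sub_add_cancel
  map_rel_iff' := (EReal.addLECancellable_coe 1).add_le_add_iff_right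

lemma erealAddOne_eq (x : EReal) : erealAddOne x = x + 1 := rfl

lemma sInf_img_le (S T : Set ℝ) (h : ∀ a ∈ S, a + 1 ∈ T) :
    sInf ((fun a : ℝ => (a : EReal)) '' T) ≤ sInf ((fun a : ℝ => (a : EReal)) '' S) + 1 := by
  rw [← erealAddOne_eq, OrderIso.map_sInf]
  apply le_iInf₂
  rintro _ ⟨a, ha, rfl⟩
  have : erealAddOne ((a : ℝ) : EReal) = ((a + 1 : ℝ) : EReal) := by
    rw [erealAddOne_eq]; push_cast; ring
  rw [this]
  exact sInf_le ⟨a + 1, h a ha, rfl⟩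

lemma le_sSup_img (S T : Set ℝ) (h : ∀ a ∈ S, a + 1 ∈ T) :
    sSup ((fun a : ℝ => (a : EReal)) '' S) + 1 ≤ sSup ((fun a : ℝ => (a : EReal)) '' T) := by
  rw [← erealAddOne_eq, OrderIso.map_sSup]
  apply iSup₂_le
  rintro _ ⟨a, ha, rfl⟩
  have : erealAddOne ((a : ℝ) : EReal) = ((a + 1 : ℝ) : EReal) := by
    rw [erealAddOne_eq]; push_cast; ring
  rw [this]
  exact le_sSup ⟨a + 1, h a ha, rfl⟩

theorem stmt4 (F : ℝ → ℝ) (hmono : Monotone F) (hF0 : F 0 = 0)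
    (hFlt : ∀ x, F x < 1) (hFnn : ∀ x, 0 ≤ F x)
    (EB : ℝ) (hEBpos : 0 < EB)
    (hInt : IntegrableOn (fun t => 1 - F t) (Set.Ioi 0))
    (hEB : EB = ∫ t in Set.Ioi (0 : ℝ), (1 - F t))
    (hβ : (⊥ : EReal) < lowerMat (fun x => 1 - F x)) :
    upperMat (fun x => (∫ t in Set.Ioi x, (1 - F t)) / EB)
      ≤ upperMat (fun x => 1 - F x) + 1 ∧
    lowerMat (fun x => 1 - F x) + 1
      ≤ lowerMat (fun x => (∫ t in Set.Ioi x, (1 - F t)) / EB) := by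
  set Fb : ℝ → ℝ := fun t => 1 - F t with hFb
  -- integrability facts
  have hIntx : ∀ x : ℝ, 0 < x → IntegrableOn Fb (Set.Ioi x) :=
    fun x hx => hInt.mono_set (Set.Ioi_subset_Ioi hx.le)
  have hcomp : ∀ (μ x : ℝ), 0 < μ → 0 < x →
      IntegrableOn (fun s => Fb (μ * s)) (Set.Ioi x) := by
    intro μ x hμ hx
    exact (integrableOn_Ioi_comp_mul_left_iff Fb x hμ).mpr (hIntx _ (by positivity))
  have hsub : ∀ (μ x : ℝ), 0 < μ →
      (∫ t in Set.Ioi (μ * x), Fb t) = μ * ∫ s in Set.Ioi x, Fb (μ * s) := by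
    intro μ x hμ
    rw [integral_comp_mul_left_Ioi Fb x hμ, smul_eq_mul, ← mul_assoc,
      mul_inv_cancel₀ hμ.ne', one_mul]
  constructor
  · -- upper index
    apply sInf_img_le
    rintro a ⟨C, hC, hCa⟩
    refine ⟨C, hC, fun μs hμs => ?_⟩
    obtain ⟨X, hX⟩ := hCa μs hμs
    refine ⟨max X 1, fun x hx μ hμ => ?_⟩
    have hx1 : (1 : ℝ) ≤ x := le_trans (le_max_right _ _) hx
    have hxpos : (0 : ℝ) < x := lt_of_lt_of_le one_pos hx1
    have hμ1 : (1 : ℝ) ≤ μ := hμ.1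
    have hμpos : (0 : ℝ) < μ := lt_of_lt_of_le one_pos hμ1
    have key : (∫ t in Set.Ioi (μ * x), Fb t) ≤ C * μ ^ (a + 1) * ∫ t in Set.Ioi x, Fb t := by
      rw [hsub μ x hμpos]
      have h1 : (∫ s in Set.Ioi x, Fb (μ * s)) ≤ ∫ s in Set.Ioi x, C * μ ^ a * Fb s := by
        apply setIntegral_mono_on (hcomp μ x hμpos hxpos)
          (((hIntx x hxpos).const_mul _)) measurableSet_Ioi
        intro s hs
        exact hX s (le_trans (le_trans (le_max_left _ _) hx) (le_of_lt hs)) μ hμ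
      rw [integral_const_mul] at h1
      calc μ * ∫ s in Set.Ioi x, Fb (μ * s)
          ≤ μ * (C * μ ^ a * ∫ s in Set.Ioi x, Fb s) :=
            mul_le_mul_of_nonneg_left h1 hμpos.le
        _ = C * μ ^ (a + 1) * ∫ s in Set.Ioi x, Fb s := by
            rw [Real.rpow_add_one hμpos.ne']; ring
    calc (∫ t in Set.Ioi (μ * x), Fb t) / EB
        ≤ (C * μ ^ (a + 1) * ∫ t in Set.Ioi x, Fb t) / EB :=
          by gcongr
      _ = C * μ ^ (a + 1) * ((∫ t in Set.Ioi x, Fb t) / EB) := by ring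
  · -- lower index
    apply le_sSup_img
    rintro b ⟨D, hD, hDb⟩
    refine ⟨D, hD, fun μs hμs => ?_⟩
    obtain ⟨X, hX⟩ := hDb μs hμs
    refine ⟨max X 1, fun x hx μ hμ => ?_⟩
    have hx1 : (1 : ℝ) ≤ x := le_trans (le_max_right _ _) hx
    have hxpos : (0 : ℝ) < x := lt_of_lt_of_le one_pos hx1
    have hμ1 : (1 : ℝ) ≤ μ := hμ.1
    have hμpos : (0 : ℝ) < μ := lt_of_lt_of_le one_pos hμ1
    have key : D * μ ^ (b + 1) * (∫ t in Set.Ioi x, Fb t) ≤ ∫ t in Set.Ioi (μ * x), Fb t := by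
      rw [hsub μ x hμpos]
      have h1 : (∫ s in Set.Ioi x, D * μ ^ b * Fb s) ≤ ∫ s in Set.Ioi x, Fb (μ * s) := by
        apply setIntegral_mono_on ((hIntx x hxpos).const_mul _)
          (hcomp μ x hμpos hxpos) measurableSet_Ioi
        intro s hs
        exact hX s (le_trans (le_trans (le_max_left _ _) hx) (le_of_lt hs)) μ hμ
      rw [integral_const_mul] at h1
      calc D * μ ^ (b + 1) * ∫ t in Set.Ioi x, Fb t
          = μ * (D * μ ^ b * ∫ t in Set.Ioi x, Fb t) := by
            rw [Real.rpow_add_one hμpos.ne']; ring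
        _ ≤ μ * ∫ s in Set.Ioi x, Fb (μ * s) :=
            mul_le_mul_of_nonneg_left h1 hμpos.le
    calc D * μ ^ (b + 1) * ((∫ t in Set.Ioi x, Fb t) / EB)
        = (D * μ ^ (b + 1) * ∫ t in Set.Ioi x, Fb t) / EB := by ring
      _ ≤ (∫ t in Set.Ioi (μ * x), Fb t) / EB :=
          by gcongr
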